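/- arXiv:1405.7537 — 7 statements merged into one kernel-verified Lean document; each statement's English description precedes it below -/
import Mathlib

section
/- Let A = D + ρ z zᵀ be an n×n real symmetric matrix with D = diag(d₁,…,dₙ) and ρ ≠ 0, and let λ ∈ ℝ satisfy λ ≠ dⱼ for all j. Then λ is an eigenvalue of A if and only if the secular function vanishes at λ, i.e. f(λ) = 1 + ρ ∑_{j=1}^{n} ζⱼ²/(dⱼ − λ) = 0. -/
open Matrix

/-- For a DPR1 matrix `A = D + ρ z zᵀ` with `ρ ≠ 0`, a real number `λ`
that is not a pole `dⱼ` is an eigenvalue of `A` iff the secular function vanishes at `λ`. -/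
theorem dpr1_eigenvalue_iff_secular {n : ℕ} (d z : Fin n → ℝ) (ρ : ℝ) (hρ : ρ ≠ 0)
    (A : Matrix (Fin n) (Fin n) ℝ)
    (hA : A = Matrix.diagonal d + ρ • Matrix.vecMulVec z z)
    (lam : ℝ) (hlam : ∀ j, lam ≠ d j) :
    (∃ x : Fin n → ℝ, x ≠ 0 ∧ A.mulVec x = lam • x) ↔
      1 + ρ * ∑ j, z j ^ 2 / (d j - lam) = 0 := by
  subst hA
  have hd : ∀ j, d j - lam ≠ 0 := fun j => sub_ne_zero.mpr (fun h => hlam j h.symm)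
  have hmul : ∀ (x : Fin n → ℝ) (i : Fin n),
      (Matrix.diagonal d + ρ • Matrix.vecMulVec z z).mulVec x i
        = d i * x i + ρ * (∑ j, z j * x j) * z i := by
    intro x i
    have h1 : (Matrix.vecMulVec z z).mulVec x i = z i * ∑ j, z j * x j := by
      simp [Matrix.vecMulVec, Matrix.mulVec, dotProduct, Finset.mul_sum, mul_assoc]
    simp only [Matrix.add_mulVec, Matrix.smul_mulVec, Pi.add_apply, Pi.smul_apply,
      Matrix.mulVec_diagonal, smul_eq_mul, h1]
    ring
  constructor
  · rintro ⟨x, hx0, hx⟩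
    set s := ∑ j, z j * x j with hs
    have hxi : ∀ i, x i = ρ * s * z i / (lam - d i) := by
      intro i
      have h1 : d i * x i + ρ * s * z i = lam * x i := by
        have := congrFun hx i
        rw [hmul] at this
        simpa using this
      have h2 : (lam - d i) * x i = ρ * s * z i := by linarith
      field_simp [sub_ne_zero.mpr (hlam i)]
      linarith
    have hsne : s ≠ 0 := by
      intro h0
      apply hx0
      funext i
      simp [hxi i, h0]
    have hkey : s = ρ * s * ∑ j, z j ^ 2 / (lam - d j) := by
      calc s = ∑ j, z j * x j := hs
        _ = ∑ j, ρ * s * (z j ^ 2 / (lam - d j)) := by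
            apply Finset.sum_congr rfl
            intro j _
            rw [hxi j]
            field_simp
        _ = ρ * s * ∑ j, z j ^ 2 / (lam - d j) := (Finset.mul_sum _ _ _).symm
    have hflip : ∑ j, z j ^ 2 / (lam - d j) = - ∑ j, z j ^ 2 / (d j - lam) := by
      rw [← Finset.sum_neg_distrib]
      apply Finset.sum_congr rfl
      intro j _
      rw [← neg_sub, div_neg]
    rw [hflip] at hkey
    have : s * (1 + ρ * ∑ j, z j ^ 2 / (d j - lam)) = 0 := by linear_combination hkey
    rcases mul_eq_zero.mp this with h | h
    · exact absurd h hsne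
    · exact h
  · intro hf
    refine ⟨fun i => z i / (d i - lam), ?_, ?_⟩
    · intro h0
      have hs : ∑ j, z j * (z j / (d j - lam)) = 0 := by
        simp [congrFun h0]
      have hs2 : ∑ j, z j ^ 2 / (d j - lam) = 0 := by
        rw [← hs]
        apply Finset.sum_congr rfl
        intro j _
        rw [pow_two, mul_div_assoc]
      rw [hs2] at hf
      simp at hf
    · funext i
      rw [hmul]
      have hs2 : ∑ j, z j * (z j / (d j - lam)) = ∑ j, z j ^ 2 / (d j - lam) := by
        apply Finset.sum_congr rfl
        intro j _
        rw [pow_two, mul_div_assoc]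
      rw [hs2]
      have hS : ρ * ∑ j, z j ^ 2 / (d j - lam) = -1 := by linarith
      rw [hS]
      simp only [Pi.smul_apply, smul_eq_mul]
      field_simp [hd i]
      ring
end

section
/- Let A = D + ρ z zᵀ be an n×n real symmetric matrix, where D = diag(d₁,…,dₙ) with d₁ > d₂ > ⋯ > dₙ, ρ > 0, and ζⱼ ≠ 0 for all j. Let λ₁ ≥ λ₂ ≥ ⋯ ≥ λₙ be the eigenvalues of A listed in decreasing order (with multiplicity). Then the strict interlacing property holds: λ₁ > d₁ > λ₂ > d₂ > ⋯ > λₙ > dₙ. -/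
open Matrix Finset

private lemma det_diag_add_rank_one' {n : ℕ} (w u : Fin n → ℝ) (c : ℝ) (hw : ∀ j, w j ≠ 0) :
    (Matrix.diagonal w + c • Matrix.vecMulVec u u).det
      = ∏ j, w j + c * ∑ j, (u j)^2 * ∏ k ∈ Finset.univ.erase j, w k := by
  have hrw : c • Matrix.vecMulVec u u = replicateCol (Fin 1) (c • u) * replicateRow (Fin 1) u := by
    rw [vecMulVec_eq (Fin 1), replicateCol_smul, smul_mul]
    rfl
  have hunit : IsUnit (Matrix.diagonal w).det := by
    rw [det_diagonal]
    exact isUnit_iff_ne_zero.mpr (Finset.prod_ne_zero_iff.mpr fun j _ => hw j)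
  have hinv : (Matrix.diagonal w)⁻¹ = Matrix.diagonal (fun j => (w j)⁻¹) := by
    apply Matrix.inv_eq_right_inv
    rw [diagonal_mul_diagonal]
    have : (fun i => w i * (w i)⁻¹) = fun _ => (1:ℝ) := funext fun i => mul_inv_cancel₀ (hw i)
    rw [this, diagonal_one]
  rw [hrw, Matrix.det_add_mul _ _ hunit, hinv, det_diagonal, Matrix.det_unique,
    Matrix.add_apply, Matrix.one_apply_eq, Matrix.mul_apply]
  have e2 : ∀ j : Fin n, (replicateRow (Fin 1) u * Matrix.diagonal fun j => (w j)⁻¹) default j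
      * replicateCol (Fin 1) (c • u) j default = c * ((u j)^2 * (w j)⁻¹) := by
    intro j
    rw [Matrix.mul_diagonal, Matrix.replicateRow_apply, Matrix.replicateCol_apply, Pi.smul_apply, smul_eq_mul]
    ring
  rw [Finset.sum_congr rfl fun j _ => e2 j, mul_add, mul_one, Finset.mul_sum, Finset.mul_sum]
  congr 1
  apply Finset.sum_congr rfl
  intro j _
  have h3 : (∏ k, w k) = w j * ∏ k ∈ Finset.univ.erase j, w k :=
    (Finset.mul_prod_erase _ _ (Finset.mem_univ j)).symm
  rw [h3]
  field_simp
  rw [div_eq_iff (hw j)]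
  ring

private lemma det_sub_smul_one' {n : ℕ} (A : Matrix (Fin n) (Fin n) ℝ) (hHerm : A.IsHermitian)
    (x : ℝ) : (A - x • 1).det = ∏ j, (hHerm.eigenvalues j - x) := by
  set U : Matrix (Fin n) (Fin n) ℝ := (hHerm.eigenvectorUnitary : Matrix (Fin n) (Fin n) ℝ)
    with hUdef
  have hU1 : U * star U = 1 := Matrix.mem_unitaryGroup_iff.mp hHerm.eigenvectorUnitary.2
  have h2 : A - x • 1
      = U * (Matrix.diagonal (RCLike.ofReal ∘ hHerm.eigenvalues) - x • 1) * star U := by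
    rw [Matrix.mul_sub, Matrix.sub_mul]
    congr 1
    · exact hHerm.spectral_theorem
    · rw [Matrix.mul_smul, Matrix.mul_one, Matrix.smul_mul, hU1]
  rw [h2, Matrix.det_mul_right_comm, hU1, Matrix.one_mul]
  have h3 : Matrix.diagonal (RCLike.ofReal ∘ hHerm.eigenvalues) - x • (1 : Matrix (Fin n) (Fin n) ℝ)
      = Matrix.diagonal (fun j => hHerm.eigenvalues j - x) := by
    rw [Matrix.smul_one_eq_diagonal, Matrix.diagonal_sub]
    congr 1
  rw [h3, Matrix.det_diagonal]

/-- For an irreducible DPR1 matrix `A = D + ρ z zᵀ` with `d₁ > ⋯ > dₙ`,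
`ρ > 0` and all `ζⱼ ≠ 0`, the decreasingly ordered eigenvalues `λ₁ ≥ ⋯ ≥ λₙ` of `A`
strictly interlace the poles: `λ₁ > d₁ > λ₂ > d₂ > ⋯ > λₙ > dₙ`. -/
theorem dpr1_interlacing {n : ℕ} (d z : Fin n → ℝ) (ρ : ℝ) (hρ : 0 < ρ)
    (hz : ∀ j, z j ≠ 0) (hd : StrictAnti d)
    (A : Matrix (Fin n) (Fin n) ℝ)
    (hA : A = Matrix.diagonal d + ρ • Matrix.vecMulVec z z)
    (hHerm : A.IsHermitian)
    (lam : Fin n → ℝ) (hord : Antitone lam)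
    (hperm : ∃ σ : Equiv.Perm (Fin n), lam = hHerm.eigenvalues ∘ σ) :
    ∀ i : Fin n, d i < lam i ∧ ∀ hi : (i : ℕ) + 1 < n, lam ⟨(i : ℕ) + 1, hi⟩ < d i := by
  classical
  obtain ⟨σ, hσ⟩ := hperm
  -- the key polynomial identity, first off the poles, then everywhere by continuity
  have hFG : ∀ x : ℝ, (∏ j, (lam j - x))
      = ∏ j, (d j - x) + ρ * ∑ j, (z j)^2 * ∏ k ∈ Finset.univ.erase j, (d k - x) := by
    have hcF : Continuous fun x : ℝ => ∏ j, (lam j - x) :=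
      continuous_finset_prod _ fun j _ => continuous_const.sub continuous_id
    have hcG : Continuous fun x : ℝ =>
        ∏ j, (d j - x) + ρ * ∑ j, (z j)^2 * ∏ k ∈ Finset.univ.erase j, (d k - x) := by
      refine (continuous_finset_prod _ fun j _ => continuous_const.sub continuous_id).add
        (continuous_const.mul (continuous_finset_sum _ fun j _ => continuous_const.mul
          (continuous_finset_prod _ fun k _ => continuous_const.sub continuous_id)))
    have hdense : Dense ((Set.range d)ᶜ) :=
      Set.Countable.dense_compl ℝ ((Set.finite_range d).countable)
    have heq : Set.EqOn (fun x : ℝ => ∏ j, (lam j - x))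
        (fun x : ℝ => ∏ j, (d j - x)
          + ρ * ∑ j, (z j)^2 * ∏ k ∈ Finset.univ.erase j, (d k - x)) ((Set.range d)ᶜ) := by
      intro x hx
      have hdx : ∀ j, d j - x ≠ 0 := fun j => sub_ne_zero.mpr fun h => hx ⟨j, h⟩
      have h1 : (∏ j, (lam j - x)) = (A - x • 1).det := by
        rw [det_sub_smul_one' A hHerm x, hσ]
        exact (Equiv.prod_comp σ (fun j => hHerm.eigenvalues j - x))
      have h2 : A - x • 1
          = Matrix.diagonal (fun j => d j - x) + ρ • Matrix.vecMulVec z z := by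
        rw [hA, Matrix.smul_one_eq_diagonal, add_sub_right_comm, Matrix.diagonal_sub]
      simp only
      rw [h1, h2, det_diag_add_rank_one' _ _ _ hdx]
    have := Continuous.ext_on hdense hcF hcG heq
    intro x; exact congrFun this x
  -- value at the poles
  have hFd : ∀ m : Fin n, (∏ j, (lam j - d m))
      = ρ * ((z m)^2 * ∏ k ∈ Finset.univ.erase m, (d k - d m)) := by
    intro m
    rw [hFG (d m)]
    have h1 : (∏ j, (d j - d m)) = 0 :=
      Finset.prod_eq_zero (Finset.mem_univ m) (sub_self _)
    have h2 : (∑ j, (z j)^2 * ∏ k ∈ Finset.univ.erase j, (d k - d m))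
        = (z m)^2 * ∏ k ∈ Finset.univ.erase m, (d k - d m) := by
      apply Finset.sum_eq_single_of_mem m (Finset.mem_univ m)
      intro j _ hj
      have h0 : (∏ k ∈ Finset.univ.erase j, (d k - d m)) = 0 :=
        Finset.prod_eq_zero (Finset.mem_erase.mpr ⟨Ne.symm hj, Finset.mem_univ m⟩) (sub_self _)
      rw [h0, mul_zero]
    rw [h1, h2, zero_add]
  -- sign change forces an eigenvalue strictly in between
  have hroot : ∀ a b : ℝ, a < b → (∏ j, (lam j - a)) * (∏ j, (lam j - b)) < 0 →
      ∃ j, a < lam j ∧ lam j < b := by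
    intro a b hab hlt
    by_contra hc
    push_neg at hc
    have h0 : 0 ≤ (∏ j, (lam j - a)) * (∏ j, (lam j - b)) := by
      rw [← Finset.prod_mul_distrib]
      apply Finset.prod_nonneg
      intro j _
      rcases le_or_gt (lam j) a with h | h
      · nlinarith
      · have hb := hc j h
        nlinarith
    linarith
  -- main claim: for each m there is an eigenvalue in the m-th pole interval
  have key : ∀ m : Fin n, ∃ j, d m < lam j ∧ ∀ k : Fin n, k < m → lam j < d k := by
    intro m
    rcases Nat.eq_zero_or_pos (m : ℕ) with hm0 | hmpos
    · -- top interval (d m, ∞) with m the largest pole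
      have hne : (Finset.univ : Finset (Fin n)).Nonempty := ⟨m, Finset.mem_univ m⟩
      set T : ℝ := max (d m) (Finset.univ.sup' hne lam) + 1 with hTdef
      have hTlam : ∀ j, lam j < T := by
        intro j
        have := Finset.le_sup' lam (Finset.mem_univ j)
        have h2 : Finset.univ.sup' hne lam ≤ max (d m) (Finset.univ.sup' hne lam) :=
          le_max_right _ _
        simp only [hTdef]; linarith
      have hTd : d m < T := by
        have := le_max_left (d m) (Finset.univ.sup' hne lam)
        simp only [hTdef]; linarith
      have hsign : (∏ j, (lam j - d m)) * (∏ j, (lam j - T)) < 0 := by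
        rw [hFd m, ← Finset.mul_prod_erase Finset.univ (fun j => lam j - T) (Finset.mem_univ m)]
        have e : ρ * ((z m)^2 * ∏ k ∈ Finset.univ.erase m, (d k - d m))
            * ((lam m - T) * ∏ k ∈ Finset.univ.erase m, (lam k - T))
            = (ρ * (z m)^2 * (lam m - T))
              * ∏ k ∈ Finset.univ.erase m, ((d k - d m) * (lam k - T)) := by
          rw [Finset.prod_mul_distrib]; ring
        rw [e]
        apply mul_neg_of_neg_of_pos
        · have h1 : lam m - T < 0 := by have := hTlam m; linarith
          have h2 : 0 < (z m)^2 := pow_two_pos_of_ne_zero (hz m)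
          exact mul_neg_of_pos_of_neg (mul_pos hρ h2) h1
        · apply Finset.prod_pos
          intro k hk
          have hkm : k ≠ m := (Finset.mem_erase.mp hk).1
          have hmk : m < k := by
            rw [Fin.lt_def]
            have : (k : ℕ) ≠ (m : ℕ) := fun h => hkm (Fin.ext h)
            omega
          have h1 : d k - d m < 0 := by have := hd hmk; linarith
          have h2 : lam k - T < 0 := by have := hTlam k; linarith
          exact mul_pos_of_neg_of_neg h1 h2
      obtain ⟨j, hj1, hj2⟩ := hroot (d m) T hTd hsign
      exact ⟨j, hj1, fun k hk => absurd (Fin.lt_def.mp hk) (by omega)⟩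
    · -- interval (d m, d p) with p the predecessor of m
      have hp : (m : ℕ) - 1 < n := by omega
      set p : Fin n := ⟨(m : ℕ) - 1, hp⟩ with hpdef
      have hpv : (p : ℕ) = (m : ℕ) - 1 := rfl
      have hpm : p < m := by rw [Fin.lt_def]; show (m : ℕ) - 1 < (m : ℕ); omega
      have hpmne : p ≠ m := Fin.ne_of_lt hpm
      have hdm : d m < d p := hd hpm
      have hsign : (∏ j, (lam j - d m)) * (∏ j, (lam j - d p)) < 0 := by
        rw [hFd m, hFd p,
          ← Finset.mul_prod_erase (Finset.univ.erase m) (fun k => d k - d m)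
            (Finset.mem_erase.mpr ⟨hpmne, Finset.mem_univ p⟩),
          ← Finset.mul_prod_erase (Finset.univ.erase p) (fun k => d k - d p)
            (Finset.mem_erase.mpr ⟨Ne.symm hpmne, Finset.mem_univ m⟩),
          Finset.erase_right_comm (a := p) (b := m)]
        have e : ρ * ((z m)^2 * ((d p - d m) * ∏ k ∈ (Finset.univ.erase m).erase p, (d k - d m)))
            * (ρ * ((z p)^2 * ((d m - d p) * ∏ k ∈ (Finset.univ.erase m).erase p, (d k - d p))))
            = (ρ * ρ * (z m)^2 * (z p)^2 * ((d p - d m) * (d m - d p)))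
              * ∏ k ∈ (Finset.univ.erase m).erase p, ((d k - d m) * (d k - d p)) := by
          rw [Finset.prod_mul_distrib]; ring
        rw [e]
        apply mul_neg_of_neg_of_pos
        · have h1 : 0 < (z m)^2 := pow_two_pos_of_ne_zero (hz m)
          have h2 : 0 < (z p)^2 := pow_two_pos_of_ne_zero (hz p)
          have h3 : (0:ℝ) < ρ * ρ * (z m)^2 * (z p)^2 :=
            mul_pos (mul_pos (mul_pos hρ hρ) h1) h2
          have h4 : (d p - d m) * (d m - d p) < 0 :=
            mul_neg_of_pos_of_neg (by linarith) (by linarith)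
          exact mul_neg_of_pos_of_neg h3 h4
        · apply Finset.prod_pos
          intro k hk
          have hkp : k ≠ p := (Finset.mem_erase.mp hk).1
          have hkm : k ≠ m := (Finset.mem_erase.mp (Finset.mem_erase.mp hk).2).1
          have hkpv : (k : ℕ) ≠ (p : ℕ) := fun h => hkp (Fin.ext h)
          have hkmv : (k : ℕ) ≠ (m : ℕ) := fun h => hkm (Fin.ext h)
          rcases lt_or_gt_of_ne hkmv with h | h
          · have hk1 : k < p := by rw [Fin.lt_def]; show (k : ℕ) < (m : ℕ) - 1; omega
            have h1 : 0 < d k - d m := by have := hd (lt_trans hk1 hpm); linarith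
            have h2 : 0 < d k - d p := by have := hd hk1; linarith
            exact mul_pos h1 h2
          · have hk1 : p < k := by rw [Fin.lt_def]; show (m : ℕ) - 1 < (k : ℕ); omega
            have hk2 : m < k := by rw [Fin.lt_def]; omega
            have h1 : d k - d m < 0 := by have := hd hk2; linarith
            have h2 : d k - d p < 0 := by have := hd hk1; linarith
            exact mul_pos_of_neg_of_neg h1 h2
      obtain ⟨j, hj1, hj2⟩ := hroot (d m) (d p) hdm hsign
      refine ⟨j, hj1, fun k hk => ?_⟩
      have hkp : k ≤ p := by
        rw [Fin.le_def]
        show (k : ℕ) ≤ (m : ℕ) - 1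
        have := Fin.lt_def.mp hk; omega
      exact lt_of_lt_of_le hj2 (hd.antitone hkp)
  choose jf hjf1 hjf2 using key
  have hinj : Function.Injective jf := by
    intro a b hab
    by_contra hne
    rcases lt_or_gt_of_ne hne with h | h
    · have h1 := hjf1 a
      have h2 := hjf2 b a h
      rw [hab] at h1; linarith
    · have h1 := hjf1 b
      have h2 := hjf2 a b h
      rw [hab] at h2; linarith
  intro i
  constructor
  · -- d i < lam i
    have hex : ∃ a : Fin n, a ≤ i ∧ i ≤ jf a := by
      by_contra hc
      push_neg at hc
      have hmap : ∀ a ∈ Finset.Iic i, jf a ∈ Finset.Iio i := fun a ha =>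
        Finset.mem_Iio.mpr (hc a (Finset.mem_Iic.mp ha))
      have hle := Finset.card_le_card_of_injOn jf hmap hinj.injOn
      rw [Fin.card_Iic, Fin.card_Iio] at hle
      omega
    obtain ⟨a, hai, hia⟩ := hex
    calc d i ≤ d a := hd.antitone hai
      _ < lam (jf a) := hjf1 a
      _ ≤ lam i := hord hia
  · intro hi
    set i' : Fin n := ⟨(i : ℕ) + 1, hi⟩ with hi'def
    have hex : ∃ a : Fin n, i' ≤ a ∧ jf a ≤ i' := by
      by_contra hc
      push_neg at hc
      have hmap : ∀ a ∈ Finset.Ici i', jf a ∈ Finset.Ioi i' := fun a ha =>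
        Finset.mem_Ioi.mpr (hc a (Finset.mem_Ici.mp ha))
      have hle := Finset.card_le_card_of_injOn jf hmap hinj.injOn
      rw [Fin.card_Ici, Fin.card_Ioi] at hle
      have : (i' : ℕ) = (i : ℕ) + 1 := rfl
      omega
    obtain ⟨a, ha1, ha2⟩ := hex
    have hia : i < a := by
      apply lt_of_lt_of_le _ ha1
      rw [Fin.lt_def]; show (i : ℕ) < (i : ℕ) + 1; omega
    calc lam i' ≤ lam (jf a) := hord ha2
      _ < d i := hjf2 a i hia
end

section
/- Let A = D + ρ z zᵀ be an n×n real symmetric matrix, where D = diag(d₁,…,dₙ) with d₁ > d₂ > ⋯ > dₙ, ρ > 0, and ζⱼ ≠ 0 for all j. Then A has exactly one eigenvalue in each open interval (d_{i+1}, d_i) for i = 1,…,n−1, exactly one eigenvalue in the interval (d₁, ∞), and no eigenvalue in (−∞, dₙ]. -/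
open Matrix Filter Topology


lemma mulVec_dpr1 {n : ℕ} (d z : Fin n → ℝ) (ρ : ℝ) (x : Fin n → ℝ) (i : Fin n) :
    (Matrix.diagonal d + ρ • Matrix.vecMulVec z z).mulVec x i
      = d i * x i + ρ * (z i * ∑ j, z j * x j) := by
  rw [Matrix.add_mulVec, Matrix.smul_mulVec]
  simp [Matrix.mulVec_diagonal, Matrix.mulVec, dotProduct, Matrix.vecMulVec_apply,
    Matrix.diagonal_apply, ite_mul, Finset.mul_sum, mul_assoc]

lemma eig_iff {n : ℕ} (hn : 0 < n) (d z : Fin n → ℝ) {ρ : ℝ} (hρ : 0 < ρ)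
    (hz : ∀ j, z j ≠ 0) {μ : ℝ} (hμ : ∀ j, d j ≠ μ) :
    (∃ x : Fin n → ℝ, x ≠ 0 ∧ (Matrix.diagonal d + ρ • Matrix.vecMulVec z z).mulVec x = μ • x) ↔
      1 + ρ * ∑ j, z j ^ 2 / (d j - μ) = 0 := by
  constructor
  · rintro ⟨x, hx, heq⟩
    have hcoord : ∀ i, (d i - μ) * x i + ρ * (z i * ∑ j, z j * x j) = 0 := by
      intro i
      have := congrFun heq i
      rw [mulVec_dpr1] at this
      simp only [Pi.smul_apply, smul_eq_mul] at this
      linarith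
    set s : ℝ := ∑ j, z j * x j with hs
    have hsne : s ≠ 0 := by
      intro h0
      apply hx
      funext i
      have hi := hcoord i
      rw [h0] at hi
      have h2 : (d i - μ) * x i = 0 := by linarith
      have hdi : d i - μ ≠ 0 := sub_ne_zero.mpr (hμ i)
      simpa [hdi] using mul_eq_zero.mp h2
    have hxj : ∀ i, x i = ρ * s * z i / (μ - d i) := by
      intro i
      have hi := hcoord i
      have hdi : μ - d i ≠ 0 := sub_ne_zero.mpr (Ne.symm (hμ i))
      field_simp
      linarith
    have hsum : s = ρ * s * ∑ j, z j ^ 2 / (μ - d j) := by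
      calc s = ∑ j, z j * x j := hs
        _ = ∑ j, z j * (ρ * s * z j / (μ - d j)) :=
            Finset.sum_congr rfl (fun j _ => by rw [hxj j])
        _ = ∑ j, ρ * s * (z j ^ 2 / (μ - d j)) :=
            Finset.sum_congr rfl fun j _ => by ring
        _ = ρ * s * ∑ j, z j ^ 2 / (μ - d j) := (Finset.mul_sum _ _ _).symm
    have h1 : ρ * ∑ j, z j ^ 2 / (μ - d j) = 1 := by
      have h2 : s * (ρ * ∑ j, z j ^ 2 / (μ - d j)) = s * 1 := by
        rw [mul_one]; linear_combination -hsum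
      exact mul_left_cancel₀ hsne h2
    have hneg : ∑ j, z j ^ 2 / (d j - μ) = -∑ j, z j ^ 2 / (μ - d j) := by
      rw [← Finset.sum_neg_distrib]
      refine Finset.sum_congr rfl fun j _ => ?_
      rw [show d j - μ = -(μ - d j) by ring, div_neg]
    rw [hneg]
    linarith [h1]
  · intro hsec
    refine ⟨fun j => z j / (d j - μ), ?_, ?_⟩
    · intro h0
      have := congrFun h0 ⟨0, hn⟩
      simp only [Pi.zero_apply] at this
      exact (div_ne_zero (hz _) (sub_ne_zero.mpr (hμ _))) this
    · funext i
      rw [mulVec_dpr1]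
      have hzx : ∑ j, z j * (z j / (d j - μ)) = ∑ j, z j ^ 2 / (d j - μ) := by
        refine Finset.sum_congr rfl fun j _ => by ring
      rw [hzx]
      have h2 : ρ * (z i * ∑ j, z j ^ 2 / (d j - μ)) = -z i := by
        have hT : ρ * ∑ j, z j ^ 2 / (d j - μ) = -1 := by linarith
        calc ρ * (z i * ∑ j, z j ^ 2 / (d j - μ))
            = z i * (ρ * ∑ j, z j ^ 2 / (d j - μ)) := by ring
          _ = -z i := by rw [hT]; ring
      rw [h2]
      have hdi : d i - μ ≠ 0 := sub_ne_zero.mpr (hμ i)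
      simp only [Pi.smul_apply, smul_eq_mul]
      field_simp
      ring
lemma not_eig_low {n : ℕ} (hn : 0 < n) (d z : Fin n → ℝ) {ρ : ℝ} (hρ : 0 < ρ)
    (hz : ∀ j, z j ≠ 0) (hd : StrictAnti d) {μ : ℝ}
    (hμ : μ ≤ d ⟨n - 1, Nat.sub_lt hn Nat.one_pos⟩) :
    ¬ ∃ x : Fin n → ℝ, x ≠ 0 ∧
      (Matrix.diagonal d + ρ • Matrix.vecMulVec z z).mulVec x = μ • x := by
  rintro ⟨x, hx, heq⟩
  set last : Fin n := ⟨n - 1, Nat.sub_lt hn Nat.one_pos⟩ with hlast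
  have hcoord : ∀ i, (d i - μ) * x i + ρ * (z i * ∑ j, z j * x j) = 0 := by
    intro i
    have := congrFun heq i
    rw [mulVec_dpr1] at this
    simp only [Pi.smul_apply, smul_eq_mul] at this
    linarith
  set s : ℝ := ∑ j, z j * x j with hs
  have hdge : ∀ i, μ ≤ d i := by
    intro i
    refine le_trans hμ (hd.antitone ?_)
    exact Fin.mk_le_mk.mpr (Nat.le_sub_one_of_lt i.isLt)
  have h0 : ∑ i, (((d i - μ) * x i + ρ * (z i * s)) * x i) = 0 :=
    Finset.sum_eq_zero (fun i _ => by rw [hcoord i, zero_mul])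
  have key : ∑ i, (d i - μ) * x i ^ 2 + ρ * (s * s) = 0 := by
    calc ∑ i, (d i - μ) * x i ^ 2 + ρ * (s * s)
        = ∑ i, (d i - μ) * x i ^ 2 + ∑ i, ρ * s * (z i * x i) := by
          rw [← Finset.mul_sum, ← hs]; ring
      _ = ∑ i, ((d i - μ) * x i ^ 2 + ρ * s * (z i * x i)) :=
          (Finset.sum_add_distrib).symm
      _ = ∑ i, (((d i - μ) * x i + ρ * (z i * s)) * x i) :=
          Finset.sum_congr rfl fun i _ => by ring
      _ = 0 := h0
  have hterm : ∀ i ∈ Finset.univ, (0:ℝ) ≤ (d i - μ) * x i ^ 2 :=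
    fun i _ => mul_nonneg (sub_nonneg.mpr (hdge i)) (sq_nonneg _)
  have hsum_nonneg : 0 ≤ ∑ i, (d i - μ) * x i ^ 2 := Finset.sum_nonneg hterm
  have hss : 0 ≤ ρ * (s * s) := mul_nonneg hρ.le (mul_self_nonneg s)
  have hs0 : s = 0 := by
    have : ρ * (s * s) = 0 := le_antisymm (by linarith) hss
    have := (mul_eq_zero.mp this).resolve_left (ne_of_gt hρ)
    exact mul_self_eq_zero.mp this
  have hxj : ∀ i, i ≠ last → x i = 0 := by
    intro i hi
    have hcoord' := hcoord i
    rw [hs0] at hcoord'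
    have h2 : (d i - μ) * x i = 0 := by linarith
    have hlt : μ < d i := by
      refine lt_of_le_of_lt hμ (hd ?_)
      refine Fin.mk_lt_mk.mpr ?_
      have h3 : (i : ℕ) ≤ n - 1 := Nat.le_sub_one_of_lt i.isLt
      exact lt_of_le_of_ne h3 (fun h => hi (Fin.ext h))
    exact (mul_eq_zero.mp h2).resolve_left (by linarith)
  have hslast : s = z last * x last := by
    rw [hs]
    exact Finset.sum_eq_single_of_mem last (Finset.mem_univ _)
      (fun j _ hj => by rw [hxj j hj, mul_zero])
  have hxlast : x last = 0 := by
    have := hslast; rw [hs0] at this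
    exact ((mul_eq_zero.mp this.symm).resolve_left (hz last))
  apply hx
  funext i
  by_cases hi : i = last
  · rw [hi]; exact hxlast
  · exact hxj i hi

lemma inv_lt_inv_same_sign {p q : ℝ} (h : q < p) (hpq : 0 < p * q) : p⁻¹ < q⁻¹ := by
  rcases mul_pos_iff.mp hpq with ⟨hp, hq0⟩ | ⟨hp, hq0⟩
  · exact inv_strictAnti₀ hq0 h
  · have hp0 : p ≠ 0 := ne_of_lt hp
    have hq0' : q ≠ 0 := ne_of_lt hq0
    nlinarith [mul_inv_cancel₀ hp0, mul_inv_cancel₀ hq0', mul_pos hpq hpq]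

lemma sum_strictmono {n : ℕ} (hn : 0 < n) (d z : Fin n → ℝ) (hz : ∀ j, z j ≠ 0)
    {a b : ℝ} (hab : a < b) (hside : ∀ j, d j < a ∨ b < d j) :
    ∑ j, z j ^ 2 / (d j - a) < ∑ j, z j ^ 2 / (d j - b) := by
  have hne : (Finset.univ : Finset (Fin n)).Nonempty := ⟨⟨0, hn⟩, Finset.mem_univ _⟩
  refine Finset.sum_lt_sum_of_nonempty hne fun j _ => ?_
  have hzj : 0 < z j ^ 2 :=
    lt_of_le_of_ne (sq_nonneg _) (Ne.symm (pow_ne_zero _ (hz j)))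
  rw [div_eq_mul_inv, div_eq_mul_inv]
  refine mul_lt_mul_of_pos_left ?_ hzj
  refine inv_lt_inv_same_sign (by linarith) ?_
  rcases hside j with h | h
  · have : d j - a < 0 := by linarith
    have h2 : d j - b < 0 := by linarith
    exact mul_pos_of_neg_of_neg this h2
  · exact mul_pos (by linarith) (by linarith)

lemma tendsto_secular_atBot {n : ℕ} (d z : Fin n → ℝ) (hz : ∀ j, z j ≠ 0)
    (j0 : Fin n) (hother : ∀ j, j ≠ j0 → d j ≠ d j0) :
    Tendsto (fun μ => ∑ j, z j ^ 2 / (d j - μ)) (𝓝[>] (d j0)) atBot := by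
  have hsplit : ∀ μ : ℝ, ∑ j, z j ^ 2 / (d j - μ)
      = z j0 ^ 2 / (d j0 - μ) + ∑ j ∈ Finset.univ.erase j0, z j ^ 2 / (d j - μ) :=
    fun μ => (Finset.add_sum_erase _ (fun j => z j ^ 2 / (d j - μ))
      (Finset.mem_univ j0)).symm
  have h1 : Tendsto (fun μ => μ - d j0) (𝓝[>] (d j0)) (𝓝[>] 0) := by
    have hbase : Tendsto (fun μ : ℝ => μ - d j0) (𝓝 (d j0)) (𝓝 0) := by
      simpa using (tendsto_id (α := ℝ) (x := 𝓝 (d j0))).sub_const (d j0)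
    refine tendsto_nhdsWithin_of_tendsto_nhds_of_eventually_within _
      (hbase.mono_left nhdsWithin_le_nhds) ?_
    filter_upwards [self_mem_nhdsWithin] with μ hμ
    exact sub_pos.mpr (Set.mem_Ioi.mp hμ)
  have h2 : Tendsto (fun μ => (μ - d j0)⁻¹) (𝓝[>] (d j0)) atTop :=
    tendsto_inv_nhdsGT_zero.comp h1
  have hzj0 : 0 < z j0 ^ 2 :=
    lt_of_le_of_ne (sq_nonneg _) (Ne.symm (pow_ne_zero _ (hz j0)))
  have h3 : Tendsto (fun μ => z j0 ^ 2 * (μ - d j0)⁻¹) (𝓝[>] (d j0)) atTop :=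
    Tendsto.const_mul_atTop hzj0 h2
  have h4 : Tendsto (fun μ => z j0 ^ 2 / (d j0 - μ)) (𝓝[>] (d j0)) atBot := by
    have := tendsto_neg_atTop_atBot.comp h3
    refine this.congr fun μ => ?_
    simp only [Function.comp_apply]
    rw [div_eq_mul_inv, show d j0 - μ = -(μ - d j0) by ring, inv_neg, mul_neg]
  have h5 : Tendsto (fun μ => ∑ j ∈ Finset.univ.erase j0, z j ^ 2 / (d j - μ))
      (𝓝[>] (d j0)) (𝓝 (∑ j ∈ Finset.univ.erase j0, z j ^ 2 / (d j - d j0))) := by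
    refine Tendsto.mono_left ?_ nhdsWithin_le_nhds
    refine tendsto_finset_sum _ fun j hj => ?_
    have hne : d j - d j0 ≠ 0 :=
      sub_ne_zero.mpr (hother j (Finset.ne_of_mem_erase hj))
    exact (continuousAt_const.div
      ((continuous_const.sub continuous_id).continuousAt) hne)
  exact (h4.atBot_add h5).congr fun μ => (hsplit μ).symm

lemma tendsto_secular_atTop {n : ℕ} (d z : Fin n → ℝ) (hz : ∀ j, z j ≠ 0)
    (j0 : Fin n) (hother : ∀ j, j ≠ j0 → d j ≠ d j0) :
    Tendsto (fun μ => ∑ j, z j ^ 2 / (d j - μ)) (𝓝[<] (d j0)) atTop := by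
  have hsplit : ∀ μ : ℝ, ∑ j, z j ^ 2 / (d j - μ)
      = z j0 ^ 2 / (d j0 - μ) + ∑ j ∈ Finset.univ.erase j0, z j ^ 2 / (d j - μ) :=
    fun μ => (Finset.add_sum_erase _ (fun j => z j ^ 2 / (d j - μ))
      (Finset.mem_univ j0)).symm
  have h1 : Tendsto (fun μ => d j0 - μ) (𝓝[<] (d j0)) (𝓝[>] 0) := by
    have hbase : Tendsto (fun μ : ℝ => d j0 - μ) (𝓝 (d j0)) (𝓝 0) := by
      have h0 : Tendsto (fun μ : ℝ => d j0 - μ) (𝓝 (d j0)) (𝓝 (d j0 - d j0)) :=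
        tendsto_const_nhds.sub tendsto_id
      simpa using h0
    refine tendsto_nhdsWithin_of_tendsto_nhds_of_eventually_within _
      (hbase.mono_left nhdsWithin_le_nhds) ?_
    filter_upwards [self_mem_nhdsWithin] with μ hμ
    exact sub_pos.mpr (Set.mem_Iio.mp hμ)
  have h2 : Tendsto (fun μ => (d j0 - μ)⁻¹) (𝓝[<] (d j0)) atTop :=
    tendsto_inv_nhdsGT_zero.comp h1
  have hzj0 : 0 < z j0 ^ 2 :=
    lt_of_le_of_ne (sq_nonneg _) (Ne.symm (pow_ne_zero _ (hz j0)))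
  have h4 : Tendsto (fun μ => z j0 ^ 2 / (d j0 - μ)) (𝓝[<] (d j0)) atTop := by
    have h3 := Tendsto.const_mul_atTop hzj0 h2
    exact h3.congr fun μ => (div_eq_mul_inv _ _).symm
  have h5 : Tendsto (fun μ => ∑ j ∈ Finset.univ.erase j0, z j ^ 2 / (d j - μ))
      (𝓝[<] (d j0)) (𝓝 (∑ j ∈ Finset.univ.erase j0, z j ^ 2 / (d j - d j0))) := by
    refine Tendsto.mono_left ?_ nhdsWithin_le_nhds
    refine tendsto_finset_sum _ fun j hj => ?_
    have hne : d j - d j0 ≠ 0 :=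
      sub_ne_zero.mpr (hother j (Finset.ne_of_mem_erase hj))
    exact (continuousAt_const.div
      ((continuous_const.sub continuous_id).continuousAt) hne)
  exact (h4.atTop_add h5).congr fun μ => (hsplit μ).symm

lemma tendsto_secular_zero {n : ℕ} (d z : Fin n → ℝ) :
    Tendsto (fun μ => ∑ j, z j ^ 2 / (d j - μ)) atTop (𝓝 0) := by
  have h : Tendsto (fun μ => ∑ j, z j ^ 2 / (d j - μ)) atTop (𝓝 (∑ j : Fin n, (0:ℝ))) := by
    refine tendsto_finset_sum _ fun j _ => ?_
    have h1 : Tendsto (fun μ : ℝ => μ - d j) atTop atTop :=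
      tendsto_atTop_add_const_right _ _ tendsto_id
    have h2 : Tendsto (fun μ : ℝ => (μ - d j)⁻¹) atTop (𝓝 0) :=
      tendsto_inv_atTop_zero.comp h1
    have h3 : Tendsto (fun μ : ℝ => -(z j ^ 2 * (μ - d j)⁻¹)) atTop (𝓝 0) := by
      simpa using (h2.const_mul (z j ^ 2)).neg
    refine h3.congr fun μ => ?_
    rw [div_eq_mul_inv, show d j - μ = -(μ - d j) by ring, inv_neg, mul_neg]
  simpa using h

lemma continuousOn_secular {n : ℕ} (d z : Fin n → ℝ) {S : Set ℝ}
    (hS : ∀ μ ∈ S, ∀ j, d j - μ ≠ 0) :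
    ContinuousOn (fun μ => ∑ j, z j ^ 2 / (d j - μ)) S := by
  refine continuousOn_finset_sum _ fun j _ => ?_
  exact ContinuousOn.div continuousOn_const
    ((continuous_const.sub continuous_id).continuousOn)
    (fun μ hμ => hS μ hμ j)

/-- For an irreducible DPR1 matrix `A = D + ρ z zᵀ` with `d₁ > ⋯ > dₙ`,
`ρ > 0` and all `ζⱼ ≠ 0`, there is exactly one eigenvalue of `A` in each open interval
`(d_{i+1}, d_i)`, exactly one eigenvalue in `(d₁, ∞)`, and no eigenvalue in `(−∞, dₙ]`. -/
theorem dpr1_eigenvalue_location {n : ℕ} (hn : 0 < n) (d z : Fin n → ℝ) (ρ : ℝ)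
    (hρ : 0 < ρ) (hz : ∀ j, z j ≠ 0) (hd : StrictAnti d)
    (A : Matrix (Fin n) (Fin n) ℝ)
    (hA : A = Matrix.diagonal d + ρ • Matrix.vecMulVec z z) :
    (∀ i : Fin n, ∀ hi : (i : ℕ) + 1 < n,
      ∃! μ : ℝ, (∃ x : Fin n → ℝ, x ≠ 0 ∧ A.mulVec x = μ • x) ∧
        d ⟨(i : ℕ) + 1, hi⟩ < μ ∧ μ < d i) ∧
    (∃! μ : ℝ, (∃ x : Fin n → ℝ, x ≠ 0 ∧ A.mulVec x = μ • x) ∧ d ⟨0, hn⟩ < μ) ∧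
    (∀ μ : ℝ, μ ≤ d ⟨n - 1, Nat.sub_lt hn Nat.one_pos⟩ →
      ¬ ∃ x : Fin n → ℝ, x ≠ 0 ∧ A.mulVec x = μ • x) := by
  subst hA
  set g : ℝ → ℝ := fun μ => ∑ j, z j ^ 2 / (d j - μ) with hg
  have hρ' : ρ ≠ 0 := ne_of_gt hρ
  have hneg : -1 / ρ < 0 := by
    have : 0 < 1 / ρ := by positivity
    rw [neg_div]; linarith
  have hinj : Function.Injective d := hd.injective
  refine ⟨?_, ?_, ?_⟩
  · -- middle intervals
    intro i hi
    set i' : Fin n := ⟨(i : ℕ) + 1, hi⟩ with hi'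
    have hlt : d i' < d i := hd (by simp [Fin.lt_def, hi'])
    have hdich : ∀ j : Fin n, d j ≤ d i' ∨ d i ≤ d j := by
      intro j
      rcases le_or_gt j i with h | h
      · exact Or.inr (hd.antitone h)
      · refine Or.inl (hd.antitone ?_)
        rw [Fin.le_def]
        exact h
    have hne_of_mem : ∀ μ ∈ Set.Ioo (d i') (d i), ∀ j, d j ≠ μ := by
      intro μ hμ j
      rcases hdich j with h | h
      · exact ne_of_lt (lt_of_le_of_lt h hμ.1)
      · exact ne_of_gt (lt_of_lt_of_le hμ.2 h)
    have hside : ∀ a b : ℝ, a ∈ Set.Ioo (d i') (d i) → b ∈ Set.Ioo (d i') (d i) →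
        ∀ j, d j < a ∨ b < d j := by
      intro a b ha hb j
      rcases hdich j with h | h
      · exact Or.inl (lt_of_le_of_lt h ha.1)
      · exact Or.inr (lt_of_lt_of_le hb.2 h)
    -- point a near lower end with g a < -1/ρ
    have hbot := tendsto_secular_atBot d z hz i' (fun j hj => hinj.ne hj)
    have ha' : ∃ a, (g a < -1/ρ ∧ a < d i) ∧ a ∈ Set.Ioi (d i') := by
      refine (((hbot.eventually (eventually_lt_atBot (-1/ρ))).and
        ((eventually_lt_nhds hlt).filter_mono nhdsWithin_le_nhds)).and
        eventually_mem_nhdsWithin).exists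
    obtain ⟨a, ⟨hga, haD⟩, haI⟩ := ha'
    have haIoo : a ∈ Set.Ioo (d i') (d i) := ⟨haI, haD⟩
    have htop := tendsto_secular_atTop d z hz i (fun j hj => hinj.ne hj)
    have hb' : ∃ b, (-1/ρ < g b ∧ d i' < b) ∧ b ∈ Set.Iio (d i) := by
      refine (((htop.eventually (eventually_gt_atTop (-1/ρ))).and
        ((eventually_gt_nhds hlt).filter_mono nhdsWithin_le_nhds)).and
        eventually_mem_nhdsWithin).exists
    obtain ⟨b, ⟨hgb, hbD⟩, hbI⟩ := hb'
    have hbIoo : b ∈ Set.Ioo (d i') (d i) := ⟨hbD, hbI⟩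
    have hab : a < b := by
      rcases lt_trichotomy a b with h | h | h
      · exact h
      · exfalso; rw [h] at hga; linarith
      · exfalso
        have h2 : g b < g a := sum_strictmono hn d z hz h (hside b a hbIoo haIoo)
        linarith
    have hIccsub : Set.Icc a b ⊆ Set.Ioo (d i') (d i) := fun μ hμ =>
      ⟨lt_of_lt_of_le haIoo.1 hμ.1, lt_of_le_of_lt hμ.2 hbIoo.2⟩
    have hcont : ContinuousOn g (Set.Icc a b) := by
      refine continuousOn_secular d z fun μ hμ j => ?_
      exact sub_ne_zero.mpr (hne_of_mem μ (hIccsub hμ) j)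
    have hmem : (-1/ρ) ∈ Set.Icc (g a) (g b) := ⟨le_of_lt hga, le_of_lt hgb⟩
    obtain ⟨μ₀, hμ₀mem, hgμ₀⟩ := intermediate_value_Icc (le_of_lt hab) hcont hmem
    have hμ₀Ioo : μ₀ ∈ Set.Ioo (d i') (d i) := hIccsub hμ₀mem
    have hsec : 1 + ρ * g μ₀ = 0 := by rw [hgμ₀]; field_simp; norm_num
    have heig : ∃ x : Fin n → ℝ, x ≠ 0 ∧
        (Matrix.diagonal d + ρ • Matrix.vecMulVec z z).mulVec x = μ₀ • x :=
      (eig_iff hn d z hρ hz (hne_of_mem μ₀ hμ₀Ioo)).mpr hsec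
    refine ⟨μ₀, ⟨heig, hμ₀Ioo.1, hμ₀Ioo.2⟩, ?_⟩
    rintro μ' ⟨heig', hμ'1, hμ'2⟩
    have hμ'Ioo : μ' ∈ Set.Ioo (d i') (d i) := ⟨hμ'1, hμ'2⟩
    have hsec' : 1 + ρ * g μ' = 0 :=
      (eig_iff hn d z hρ hz (hne_of_mem μ' hμ'Ioo)).mp heig'
    have hgeq : g μ' = g μ₀ := by
      rw [hgμ₀]
      field_simp at hsec' ⊢
      linarith
    rcases lt_trichotomy μ' μ₀ with h | h | h
    · exfalso
      have h2 : g μ' < g μ₀ := sum_strictmono hn d z hz h (hside μ' μ₀ hμ'Ioo hμ₀Ioo)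
      linarith
    · exact h
    · exfalso
      have h2 : g μ₀ < g μ' := sum_strictmono hn d z hz h (hside μ₀ μ' hμ₀Ioo hμ'Ioo)
      linarith
  · -- (d 0, ∞)
    set i0 : Fin n := ⟨0, hn⟩ with hi0
    have hmax : ∀ j, d j ≤ d i0 := fun j => hd.antitone (by
      rw [Fin.le_def]; exact Nat.zero_le _)
    have hne_of_mem : ∀ μ ∈ Set.Ioi (d i0), ∀ j, d j ≠ μ := fun μ hμ j =>
      ne_of_lt (lt_of_le_of_lt (hmax j) hμ)
    have hside : ∀ a b : ℝ, a ∈ Set.Ioi (d i0) → b ∈ Set.Ioi (d i0) →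
        ∀ j, d j < a ∨ b < d j := fun a b ha _ j =>
      Or.inl (lt_of_le_of_lt (hmax j) ha)
    have hbot := tendsto_secular_atBot d z hz i0 (fun j hj => hinj.ne hj)
    have ha' : ∃ a, g a < -1/ρ ∧ a ∈ Set.Ioi (d i0) := by
      refine ((hbot.eventually (eventually_lt_atBot (-1/ρ))).and
        eventually_mem_nhdsWithin).exists
    obtain ⟨a, hga, haI⟩ := ha'
    have hzero := tendsto_secular_zero d z
    have hb' : ∃ b, -1/ρ < g b ∧ d i0 < b := by
      have h1 : ∀ᶠ μ in Filter.atTop, -1/ρ < g μ :=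
        hzero.eventually (eventually_gt_nhds hneg)
      exact (h1.and (eventually_gt_atTop (d i0))).exists
    obtain ⟨b, hgb, hbI⟩ := hb'
    have hbI' : b ∈ Set.Ioi (d i0) := hbI
    have hab : a < b := by
      rcases lt_trichotomy a b with h | h | h
      · exact h
      · exfalso; rw [h] at hga; linarith
      · exfalso
        have h2 : g b < g a := sum_strictmono hn d z hz h (hside b a hbI' haI)
        linarith
    have hIccsub : Set.Icc a b ⊆ Set.Ioi (d i0) := fun μ hμ =>
      lt_of_lt_of_le haI hμ.1
    have hcont : ContinuousOn g (Set.Icc a b) := by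
      refine continuousOn_secular d z fun μ hμ j => ?_
      exact sub_ne_zero.mpr (hne_of_mem μ (hIccsub hμ) j)
    have hmem : (-1/ρ) ∈ Set.Icc (g a) (g b) := ⟨le_of_lt hga, le_of_lt hgb⟩
    obtain ⟨μ₀, hμ₀mem, hgμ₀⟩ := intermediate_value_Icc (le_of_lt hab) hcont hmem
    have hμ₀I : μ₀ ∈ Set.Ioi (d i0) := hIccsub hμ₀mem
    have hsec : 1 + ρ * g μ₀ = 0 := by rw [hgμ₀]; field_simp; norm_num
    have heig : ∃ x : Fin n → ℝ, x ≠ 0 ∧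
        (Matrix.diagonal d + ρ • Matrix.vecMulVec z z).mulVec x = μ₀ • x :=
      (eig_iff hn d z hρ hz (hne_of_mem μ₀ hμ₀I)).mpr hsec
    refine ⟨μ₀, ⟨heig, hμ₀I⟩, ?_⟩
    rintro μ' ⟨heig', hμ'1⟩
    have hμ'I : μ' ∈ Set.Ioi (d i0) := hμ'1
    have hsec' : 1 + ρ * g μ' = 0 :=
      (eig_iff hn d z hρ hz (hne_of_mem μ' hμ'I)).mp heig'
    have hgeq : g μ' = g μ₀ := by
      rw [hgμ₀]
      field_simp at hsec' ⊢
      linarith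
    rcases lt_trichotomy μ' μ₀ with h | h | h
    · exfalso
      have h2 : g μ' < g μ₀ := sum_strictmono hn d z hz h (hside μ' μ₀ hμ'I hμ₀I)
      linarith
    · exact h
    · exfalso
      have h2 : g μ₀ < g μ' := sum_strictmono hn d z hz h (hside μ₀ μ' hμ₀I hμ'I)
      linarith
  · intro μ hμ
    exact not_eig_low hn d z hρ hz hd hμ
end

section
/- Let A = D + ρ z zᵀ be an n×n real symmetric matrix, where D = diag(d₁,…,dₙ) has pairwise distinct diagonal entries, ρ ≠ 0, and ζⱼ ≠ 0 for all j. Then no diagonal entry dᵢ is an eigenvalue of A; in particular, for every i the shifted matrix A − dᵢ I is invertible. -/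
open Matrix

/-- For an irreducible DPR1 matrix `A = D + ρ z zᵀ` (pairwise distinct `dⱼ`,
`ρ ≠ 0`, all `ζⱼ ≠ 0`), no diagonal entry `dᵢ` is an eigenvalue of `A`; in particular
`A − dᵢ I` is invertible for every `i`. -/
theorem dpr1_pole_not_eigenvalue {n : ℕ} (d z : Fin n → ℝ) (ρ : ℝ) (hρ : ρ ≠ 0)
    (hz : ∀ j, z j ≠ 0) (hd : Function.Injective d)
    (A : Matrix (Fin n) (Fin n) ℝ)
    (hA : A = Matrix.diagonal d + ρ • Matrix.vecMulVec z z) :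
    ∀ i : Fin n,
      (¬ ∃ x : Fin n → ℝ, x ≠ 0 ∧ A.mulVec x = d i • x) ∧
      IsUnit (A - d i • (1 : Matrix (Fin n) (Fin n) ℝ)) := by
  intro i
  have key : ∀ x : Fin n → ℝ, A.mulVec x = d i • x → x = 0 := by
    intro x hx
    have hvm : ∀ j, (Matrix.vecMulVec z z).mulVec x j = z j * ∑ k, z k * x k := by
      intro j
      simp [Matrix.mulVec, dotProduct, Matrix.vecMulVec_apply, Finset.mul_sum, mul_assoc]
    have hrow : ∀ j, d j * x j + ρ * (z j * ∑ k, z k * x k) = d i * x j := by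
      intro j
      have h := congrFun hx j
      rw [hA] at h
      rw [Matrix.add_mulVec, Pi.add_apply, Matrix.mulVec_diagonal,
        Matrix.smul_mulVec, Pi.smul_apply, hvm j, smul_eq_mul] at h
      simpa using h
    set s : ℝ := ∑ k, z k * x k with hs
    have hsi : ρ * (z i * s) = 0 := by
      have := hrow i
      linarith
    have hs0 : s = 0 := by
      rcases mul_eq_zero.1 hsi with h | h
      · exact absurd h hρ
      · rcases mul_eq_zero.1 h with h' | h'
        · exact absurd h' (hz i)
        · exact h'
    have hxj : ∀ j, j ≠ i → x j = 0 := by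
      intro j hj
      have := hrow j
      rw [hs0] at this
      have h2 : (d j - d i) * x j = 0 := by ring_nf; linarith
      rcases mul_eq_zero.1 h2 with h | h
      · exact absurd (hd (by linarith [sub_eq_zero.1 h])) hj
      · exact h
    have hxi : x i = 0 := by
      have : s = z i * x i := by
        rw [hs]
        rw [Finset.sum_eq_single i]
        · intro k _ hk; rw [hxj k hk, mul_zero]
        · intro h; exact absurd (Finset.mem_univ i) h
      rcases mul_eq_zero.1 (this ▸ hs0) with h | h
      · exact absurd h (hz i)
      · exact h
    funext j
    by_cases hj : j = i
    · rw [hj]; exact hxi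
    · exact hxj j hj
  constructor
  · rintro ⟨x, hx0, hx⟩
    exact hx0 (key x hx)
  · rw [Matrix.isUnit_iff_isUnit_det, isUnit_iff_ne_zero]
    intro hdet
    obtain ⟨v, hv, hv0⟩ := (Matrix.exists_mulVec_eq_zero_iff).2 hdet
    apply hv
    apply key
    have h1 : (A - d i • 1).mulVec v = A.mulVec v - d i • v := by
      rw [Matrix.sub_mulVec, Matrix.smul_mulVec, Matrix.one_mulVec]
    rw [h1] at hv0
    exact sub_eq_zero.1 hv0
end

section
/- Let A = D + ρ z zᵀ be an n×n real symmetric matrix, where D = diag(d₁,…,dₙ) has pairwise distinct diagonal entries, ρ > 0, and ζⱼ ≠ 0 for all j. Then A has n pairwise distinct eigenvalues; equivalently, every eigenvalue of A is simple (its eigenspace is one-dimensional). -/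
open Matrix

set_option maxHeartbeats 1000000 in
/-- An irreducible DPR1 matrix `A = D + ρ z zᵀ` (pairwise distinct `dⱼ`,
`ρ > 0`, all `ζⱼ ≠ 0`) has `n` pairwise distinct eigenvalues; equivalently every
eigenvalue of `A` is simple, i.e. its eigenspace is one-dimensional. -/
theorem dpr1_simple_eigenvalues {n : ℕ} (d z : Fin n → ℝ) (ρ : ℝ) (hρ : 0 < ρ)
    (hz : ∀ j, z j ≠ 0) (hd : Function.Injective d)
    (A : Matrix (Fin n) (Fin n) ℝ)
    (hA : A = Matrix.diagonal d + ρ • Matrix.vecMulVec z z)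
    (hHerm : A.IsHermitian) :
    Function.Injective hHerm.eigenvalues ∧
    ∀ μ : ℝ, Module.End.HasEigenvalue A.mulVecLin μ →
      Module.finrank ℝ (Module.End.eigenspace A.mulVecLin μ) = 1 := by
  -- component equation
  have hcomp : ∀ (μ : ℝ) (v : Fin n → ℝ), v ∈ Module.End.eigenspace A.mulVecLin μ →
      ∀ j, d j * v j + ρ * (z j * (z ⬝ᵥ v)) = μ * v j := by
    intro μ v hv j
    rw [Module.End.mem_eigenspace_iff] at hv
    have := congrFun hv j
    rw [hA] at this
    rw [Matrix.mulVecLin_apply, Matrix.add_mulVec, Matrix.smul_mulVec] at this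
    simp only [Pi.add_apply, Pi.smul_apply, Matrix.mulVec_diagonal, smul_eq_mul] at this
    have hvmv : (Matrix.vecMulVec z z *ᵥ v) j = z j * (z ⬝ᵥ v) := by
      simp [Matrix.mulVec, Matrix.vecMulVec_apply, dotProduct, Finset.mul_sum, mul_assoc]
    rw [hvmv] at this
    linarith
  -- key: if z ⬝ᵥ v = 0 on eigenspace then v = 0
  have key : ∀ (μ : ℝ) (v : Fin n → ℝ), v ∈ Module.End.eigenspace A.mulVecLin μ →
      z ⬝ᵥ v = 0 → v = 0 := by
    intro μ v hv hzv
    by_contra hne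
    obtain ⟨j, hj⟩ : ∃ j, v j ≠ 0 := by
      by_contra h; push_neg at h; exact hne (funext h)
    have hdj : d j = μ := by
      have := hcomp μ v hv j
      rw [hzv] at this
      have : d j * v j = μ * v j := by linarith
      exact mul_right_cancel₀ hj this
    have hvk : ∀ k, k ≠ j → v k = 0 := by
      intro k hk
      by_contra hvk
      have hdk : d k = μ := by
        have := hcomp μ v hv k
        rw [hzv] at this
        have : d k * v k = μ * v k := by linarith
        exact mul_right_cancel₀ hvk this
      exact hk (hd (hdk.trans hdj.symm))
    have : z ⬝ᵥ v = z j * v j := by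
      rw [dotProduct]
      exact Finset.sum_eq_single j (fun k _ hk => by rw [hvk k hk, mul_zero])
        (fun h => absurd (Finset.mem_univ j) h)
    exact (mul_ne_zero (hz j) hj) (this ▸ hzv)
  -- finrank ≤ 1
  have hle : ∀ μ : ℝ, Module.finrank ℝ (Module.End.eigenspace A.mulVecLin μ) ≤ 1 := by
    intro μ
    set p := Module.End.eigenspace A.mulVecLin μ
    let φ : (Fin n → ℝ) →ₗ[ℝ] ℝ :=
      { toFun := fun v => z ⬝ᵥ v
        map_add' := fun a b => dotProduct_add z a b
        map_smul' := fun c a => by simp [dotProduct_smul] }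
    have hinj : Function.Injective (φ.comp p.subtype) := by
      rw [← LinearMap.ker_eq_bot, LinearMap.ker_eq_bot']
      intro ⟨v, hv⟩ h
      have : v = 0 := key μ v hv h
      exact Subtype.ext this
    calc Module.finrank ℝ p ≤ Module.finrank ℝ ℝ :=
          LinearMap.finrank_le_finrank_of_injective hinj
      _ = 1 := Module.finrank_self ℝ
  have heq : ∀ μ : ℝ, Module.End.HasEigenvalue A.mulVecLin μ →
      Module.finrank ℝ (Module.End.eigenspace A.mulVecLin μ) = 1 := by
    intro μ hμ
    refine le_antisymm (hle μ) ?_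
    have : Nontrivial (Module.End.eigenspace A.mulVecLin μ) :=
      Submodule.nontrivial_iff_ne_bot.mpr hμ
    exact Module.finrank_pos
  refine ⟨?_, heq⟩
  intro i j hij
  by_contra hne
  have memi : ⇑(hHerm.eigenvectorBasis i) ∈ Module.End.eigenspace A.mulVecLin (hHerm.eigenvalues i) := by
    rw [Module.End.mem_eigenspace_iff]
    exact hHerm.mulVec_eigenvectorBasis i
  have memj : ⇑(hHerm.eigenvectorBasis j) ∈ Module.End.eigenspace A.mulVecLin (hHerm.eigenvalues i) := by
    rw [Module.End.mem_eigenspace_iff, hij]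
    exact hHerm.mulVec_eigenvectorBasis j
  have horth := hHerm.eigenvectorBasis.orthonormal
  rw [orthonormal_iff_ite] at horth
  have hinner : ∀ a b : Fin n,
      (⇑(hHerm.eigenvectorBasis a) : Fin n → ℝ) ⬝ᵥ ⇑(hHerm.eigenvectorBasis b)
        = if a = b then 1 else 0 := by
    intro a b
    have := horth a b
    rw [PiLp.inner_apply] at this
    simpa [dotProduct, mul_comm] using this
  set u := (⇑(hHerm.eigenvectorBasis i) : Fin n → ℝ) with hu
  set v := (⇑(hHerm.eigenvectorBasis j) : Fin n → ℝ) with hv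
  have huu : u ⬝ᵥ u = 1 := by simpa using hinner i i
  have hvv : v ⬝ᵥ v = 1 := by simpa using hinner j j
  have huv : u ⬝ᵥ v = 0 := by simpa [hne] using hinner i j
  have hzu : z ⬝ᵥ u ≠ 0 := by
    intro h
    rw [key _ u memi h] at huu
    simp at huu
  have hw : (z ⬝ᵥ v) • u - (z ⬝ᵥ u) • v = 0 := by
    refine key (hHerm.eigenvalues i) _ ?_ ?_
    · exact Submodule.sub_mem _ (Submodule.smul_mem _ _ memi) (Submodule.smul_mem _ _ memj)
    · simp only [dotProduct_sub, dotProduct_smul, smul_eq_mul]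
      ring
  have hfin := congrArg (fun w => w ⬝ᵥ v) hw
  simp only [sub_dotProduct, smul_dotProduct, smul_eq_mul, huv, hvv, mul_zero, mul_one,
    zero_dotProduct, zero_sub, neg_eq_zero] at hfin
  exact hzu hfin
end

section
/- Let A = D + ρ z zᵀ with D = diag(d₁,…,dₙ), z ∈ ℝⁿ, ρ ≠ 0, and fix an index i with ζᵢ ≠ 0 and dⱼ ≠ dᵢ for all j ≠ i. Define the n×n symmetric arrowhead matrix M by: M_{jj} = 1/(dⱼ − dᵢ) for j ≠ i; M_{ji} = M_{ij} = −ζⱼ/(ζᵢ (dⱼ − dᵢ)) for j ≠ i; M_{ii} = (1/ζᵢ²)(1/ρ + ∑_{j≠i} ζⱼ²/(dⱼ − dᵢ)); and M_{jk} = 0 for j ≠ k with j ≠ i and k ≠ i. Then M · (A − dᵢ I) = I; in particular A − dᵢ I is invertible and (A − dᵢ I)⁻¹ = M. -/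
open Matrix

/-- For a DPR1 matrix `A = D + ρ z zᵀ` with `ρ ≠ 0`, `ζᵢ ≠ 0` and
`dⱼ ≠ dᵢ` for `j ≠ i`, the explicitly given symmetric arrowhead matrix `M` satisfies
`M (A − dᵢ I) = I`; in particular `A − dᵢ I` is invertible with inverse `M`. -/
theorem dpr1_shifted_inverse_arrowhead {n : ℕ} (d z : Fin n → ℝ) (ρ : ℝ) (hρ : ρ ≠ 0)
    (i : Fin n) (hzi : z i ≠ 0) (hd : ∀ j, j ≠ i → d j ≠ d i)
    (A : Matrix (Fin n) (Fin n) ℝ)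
    (hA : A = Matrix.diagonal d + ρ • Matrix.vecMulVec z z)
    (M : Matrix (Fin n) (Fin n) ℝ)
    (hM : M = Matrix.of fun j k =>
      if j = i then
        (if k = i then
          1 / z i ^ 2 * (1 / ρ + ∑ l ∈ Finset.univ.erase i, z l ^ 2 / (d l - d i))
        else -z k / (z i * (d k - d i)))
      else if k = i then -z j / (z i * (d j - d i))
      else if j = k then 1 / (d j - d i)
      else 0) :
    M * (A - d i • (1 : Matrix (Fin n) (Fin n) ℝ)) = 1 ∧
    IsUnit (A - d i • (1 : Matrix (Fin n) (Fin n) ℝ)) ∧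
    (A - d i • (1 : Matrix (Fin n) (Fin n) ℝ))⁻¹ = M := by
  have hd' : ∀ l, l ≠ i → d l - d i ≠ 0 := fun l hl => sub_ne_zero.mpr (hd l hl)
  have hB : ∀ l k, (A - d i • (1 : Matrix (Fin n) (Fin n) ℝ)) l k
      = ρ * (z l * z k) + (if l = k then d l - d i else 0) := by
    subst hA
    intro l k
    by_cases h : l = k <;>
      simp [Matrix.sub_apply, Matrix.add_apply, Matrix.smul_apply,
        Matrix.diagonal_apply, Matrix.vecMulVec_apply, Matrix.one_apply, h] <;> ring
  have key : M * (A - d i • (1 : Matrix (Fin n) (Fin n) ℝ)) = 1 := by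
    ext j k
    rw [Matrix.mul_apply, ← Finset.add_sum_erase _ _ (Finset.mem_univ i)]
    by_cases hj : j = i
    · subst hj
      have hrow : ∀ l ∈ Finset.univ.erase j,
          M j l * (A - d j • (1 : Matrix (Fin n) (Fin n) ℝ)) l k
          = (-ρ * z k / z j) * (z l ^ 2 / (d l - d j))
            + (if l = k then -z k / z j else 0) := by
        intro l hl
        have hli : l ≠ j := (Finset.mem_erase.mp hl).1
        rw [hB, hM]
        simp only [Matrix.of_apply, if_pos rfl, if_neg hli, if_true]
        by_cases hlk : l = k
        · subst hlk
          rw [if_pos rfl, if_pos rfl]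
          field_simp [hd' l hli]
          ring
        · rw [if_neg hlk, if_neg hlk]
          field_simp [hd' l hli]
          ring
      rw [Finset.sum_congr rfl hrow, Finset.sum_add_distrib, ← Finset.mul_sum,
        Finset.sum_ite_eq' (Finset.univ.erase j) k (fun _ => -z k / z j), hB, hM]
      simp only [Matrix.of_apply, if_pos rfl, Matrix.one_apply, if_true]
      by_cases hk : k = j
      · subst hk
        simp only [if_pos rfl, Finset.mem_erase, ne_eq, not_true_eq_false, false_and,
          if_false, sub_self, if_pos rfl, if_true]
        field_simp
        ring
      · have hjk : ¬ (j : Fin n) = k := fun h => hk h.symm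
        simp only [if_true, hjk, if_false, sub_self, Finset.mem_erase, ne_eq, hk,
          not_false_eq_true, Finset.mem_univ, and_self]
        field_simp
        ring
    · have hrow : ∀ l ∈ Finset.univ.erase i,
          M j l * (A - d i • (1 : Matrix (Fin n) (Fin n) ℝ)) l k
          = if j = l then (1 / (d j - d i)) *
              (ρ * (z l * z k) + (if l = k then d l - d i else 0)) else 0 := by
        intro l hl
        have hli : l ≠ i := (Finset.mem_erase.mp hl).1
        rw [hB, hM]
        simp only [Matrix.of_apply, if_neg hj, if_neg hli]
        by_cases hjl : j = l
        · rw [if_pos hjl, if_pos hjl]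
        · rw [if_neg hjl, if_neg hjl, zero_mul]
      rw [Finset.sum_congr rfl hrow,
        Finset.sum_ite_eq (Finset.univ.erase i) j
          (fun l => (1 / (d j - d i)) * (ρ * (z l * z k) + (if l = k then d l - d i else 0))),
        hB, hM]
      simp only [Matrix.of_apply, if_neg hj, if_pos rfl, Matrix.one_apply,
        Finset.mem_erase, ne_eq, hj, not_false_eq_true, Finset.mem_univ, and_self, if_true, if_false]
      have hii : (if i = k then d i - d i else 0) = 0 := by
        split <;> simp
      rw [hii]
      by_cases hjk : j = k
      · subst hjk
        rw [if_pos rfl, if_pos rfl]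
        field_simp [hd' j hj]
        ring
      · rw [if_neg hjk, if_neg hjk]
        field_simp [hd' j hj]
        ring
  exact ⟨key, (Matrix.isUnit_iff_isUnit_det _).mpr (Matrix.isUnit_det_of_left_inverse key), Matrix.inv_eq_left_inv key⟩
end

section
/- Let A = D + ρ z z* be an n×n complex Hermitian matrix, where D = diag(d₁,…,dₙ) is a real diagonal matrix, z = (ζ₁,…,ζₙ)ᵀ ∈ ℂⁿ, z* denotes the conjugate transpose, and ρ is a nonzero real scalar. Let λ ∈ ℝ satisfy λ ≠ dⱼ for all j. Then λ is an eigenvalue of A if and only if 1 + ρ ∑_{j=1}^{n} |ζⱼ|²/(dⱼ − λ) = 0. -/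
open Matrix

/-- For the complex Hermitian DPR1 matrix `A = D + ρ z z*` with real
diagonal `D`, real `ρ ≠ 0`, and a real `λ` distinct from all poles `dⱼ`, `λ` is an
eigenvalue of `A` iff `1 + ρ ∑ⱼ |ζⱼ|²/(dⱼ − λ) = 0`. -/
theorem dpr1_hermitian_eigenvalue_iff_secular {n : ℕ} (d : Fin n → ℝ) (z : Fin n → ℂ)
    (ρ : ℝ) (hρ : ρ ≠ 0)
    (A : Matrix (Fin n) (Fin n) ℂ)
    (hA : A = Matrix.diagonal (fun j => (d j : ℂ)) +
      (ρ : ℂ) • Matrix.vecMulVec z (fun j => star (z j)))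
    (lam : ℝ) (hlam : ∀ j, lam ≠ d j) :
    (∃ x : Fin n → ℂ, x ≠ 0 ∧ A.mulVec x = (lam : ℂ) • x) ↔
      1 + ρ * ∑ j, ‖z j‖ ^ 2 / (d j - lam) = 0 := by
  have hden : ∀ j, ((d j : ℂ) - (lam : ℂ)) ≠ 0 := by
    intro j h
    apply hlam j
    have : (d j : ℂ) = (lam : ℂ) := sub_eq_zero.mp h
    exact_mod_cast this.symm
  have hmul : ∀ (x : Fin n → ℂ) (i : Fin n), A.mulVec x i
      = (d i : ℂ) * x i + (ρ : ℂ) * z i * ∑ j, star (z j) * x j := by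
    intro x i
    subst hA
    simp [Matrix.mulVec, dotProduct, Matrix.add_apply, Matrix.diagonal_apply,
      Matrix.vecMulVec_apply, add_mul, Finset.sum_add_distrib, Finset.mul_sum,
      Finset.sum_ite_eq]
    ring_nf
  have hcast : ((1 + ρ * ∑ j, ‖z j‖ ^ 2 / (d j - lam) : ℝ) : ℂ)
      = 1 + (ρ : ℂ) * ∑ j, star (z j) * z j / ((d j : ℂ) - lam) := by
    push_cast
    congr 1
    congr 1
    apply Finset.sum_congr rfl
    intro j _
    congr 1
    rw [mul_comm, Complex.star_def, Complex.mul_conj']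
  constructor
  · rintro ⟨x, hx, hEq⟩
    set c := ∑ j, star (z j) * x j with hc
    have hco : ∀ i, ((d i : ℂ) - lam) * x i = -((ρ : ℂ) * z i * c) := by
      intro i
      have h1 := congrFun hEq i
      rw [hmul] at h1
      simp only [Pi.smul_apply, smul_eq_mul] at h1
      linear_combination h1
    have hxi : ∀ i, x i = -((ρ : ℂ) * z i * c) / ((d i : ℂ) - lam) := by
      intro i
      rw [eq_div_iff (hden i), mul_comm]
      exact hco i
    have hcne : c ≠ 0 := by
      intro h0
      apply hx
      funext i
      have h2 := hxi i
      rw [h0] at h2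
      simpa using h2
    have hkey : c = -((ρ : ℂ) * c * ∑ j, star (z j) * z j / ((d j : ℂ) - lam)) := by
      conv_lhs => rw [hc]
      trans ∑ j, -((ρ : ℂ) * c * (star (z j) * z j / ((d j : ℂ) - lam)))
      · apply Finset.sum_congr rfl
        intro j _
        rw [hxi j]
        field_simp
      · rw [Finset.sum_neg_distrib, ← Finset.mul_sum]
    have hz0 : c * ((1 : ℂ) + ρ * ∑ j, star (z j) * z j / ((d j : ℂ) - lam)) = 0 := by
      linear_combination hkey
    rcases mul_eq_zero.mp hz0 with h | h
    · exact absurd h hcne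
    · exact_mod_cast hcast.trans h
  · intro h
    have hC : (1 : ℂ) + (ρ : ℂ) * ∑ j, star (z j) * z j / ((d j : ℂ) - lam) = 0 := by
      rw [← hcast]
      exact_mod_cast h
    refine ⟨fun i => z i / ((d i : ℂ) - lam), ?_, ?_⟩
    · intro h0
      have hz : ∀ i, z i = 0 := by
        intro i
        have h2 := congrFun h0 i
        simpa [div_eq_zero_iff, hden i] using h2
      simp [hz] at hC
    · funext i
      rw [hmul]
      have hsum : ∑ j, star (z j) * (z j / ((d j : ℂ) - lam))
          = ∑ j, star (z j) * z j / ((d j : ℂ) - lam) := by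
        apply Finset.sum_congr rfl
        intro j _
        ring
      rw [hsum]
      have hS : (ρ : ℂ) * z i * ∑ j, star (z j) * z j / ((d j : ℂ) - lam) = -z i := by
        linear_combination z i * hC
      rw [hS]
      simp only [Pi.smul_apply, smul_eq_mul]
      field_simp [hden i]
      ring
end
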